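/- For a random walk on a finite tree T with m edges generated by an edge-weight function with asymmetry τ, and with absorbing vertex a, for any vertex x and any neighbor y of x in the tail of x, one has H(y,a) − H(x,a) ≤ P(τ, ℓ(y)+1), where ℓ(y) is the number of edges in the tail of y and P(t,k) = 2Σ_{j=1}^{k−1} t^j + 1. -/

import Mathlib

/-- `IsWeightedHittingTime G w a H` : `H` satisfies the linear system characterizing the
expected hitting times of the absorbing vertex `a` for the random walk on `G` generated
by the edge-weight function `w` (transition probabilities `p_{xy} = w x y / ∑_z w x z`;
`w` vanishes off edges, so the sums effectively range over neighbors). -/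
def IsWeightedHittingTime {V : Type*} [Fintype V] (G : SimpleGraph V)
    (w : V → V → ℝ) (a : V) (H : V → ℝ) : Prop :=
  H a = 0 ∧ ∀ x, x ≠ a →
    (∑ y, w x y) * H x = (∑ y, w x y) + ∑ y, w x y * H y

/-- The tail `L(v)` of a vertex `v` relative to `a`: the set of vertices `u` each of whose
walks to `a` must pass through `v`. -/
def tail {V : Type*} (G : SimpleGraph V) (a v : V) : Set V :=
  {u | ∀ p : G.Walk u a, v ∈ p.support}

/-- `ℓ(v)`: the number of edges of the subtree spanned by the tail of `v`. -/
noncomputable def tailEdges {V : Type*} (G : SimpleGraph V) (a v : V) : ℕ :=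
  (tail G a v).ncard - 1

/-- `P t m = 2·∑_{k=1}^{m−1} t^k + 1`. -/
noncomputable def P (t : ℝ) (m : ℕ) : ℝ := 2 * ∑ k ∈ Finset.Ico 1 m, t ^ k + 1

open SimpleGraph

section paths
variable {V : Type*} {T : SimpleGraph V} (ht : T.IsTree)

noncomputable def pth (u v : V) : T.Walk u v :=
  ((SimpleGraph.isTree_iff_existsUnique_path.mp ht).2 u v).choose

lemma pth_isPath (u v : V) : (pth ht u v).IsPath :=
  ((SimpleGraph.isTree_iff_existsUnique_path.mp ht).2 u v).choose_spec.1

lemma eq_pth {u v : V} {p : T.Walk u v} (hp : p.IsPath) : p = pth ht u v :=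
  ((SimpleGraph.isTree_iff_existsUnique_path.mp ht).2 u v).choose_spec.2 p hp

lemma pth_adj {u v : V} (h : T.Adj u v) :
    pth ht u v = SimpleGraph.Walk.cons h SimpleGraph.Walk.nil := by
  symm
  apply eq_pth
  rw [SimpleGraph.Walk.cons_isPath_iff]
  exact ⟨SimpleGraph.Walk.IsPath.nil, by simp [h.ne]⟩

variable (a : V)

lemma mem_tail_iff {u v : V} : v ∈ tail T a u ↔ u ∈ (pth ht v a).support := by
  constructor
  · intro h; exact h _
  · intro h p
    classical
    have hb : p.bypass = pth ht v a := eq_pth ht (SimpleGraph.Walk.bypass_isPath p)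
    exact SimpleGraph.Walk.support_bypass_subset p (hb ▸ h)

lemma mem_tail_self (v : V) : v ∈ tail T a v := fun p => p.start_mem_support

lemma pth_decomp {u v : V} (h : u ∈ (pth ht v a).support) :
    pth ht v a = (pth ht v u).append (pth ht u a) := by
  classical
  have h1 : (pth ht v a).takeUntil u h = pth ht v u :=
    eq_pth ht ((pth_isPath ht v a).takeUntil h)
  have h2 : (pth ht v a).dropUntil u h = pth ht u a :=
    eq_pth ht ((pth_isPath ht v a).dropUntil h)
  rw [← h1, ← h2, SimpleGraph.Walk.take_spec]

lemma child_pth {y u : V} (h : T.Adj y u) (hu : u ∈ tail T a y) :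
    pth ht u a = SimpleGraph.Walk.cons h.symm (pth ht y a) := by
  have hy : y ∈ (pth ht u a).support := (mem_tail_iff ht a).mp hu
  have := pth_decomp ht a hy
  rw [this, pth_adj ht h.symm]
  simp [SimpleGraph.Walk.cons_append]

lemma child_not_mem_pth {y u : V} (h : T.Adj y u) (hu : u ∈ tail T a y) :
    u ∉ (pth ht y a).support := by
  have hp : (SimpleGraph.Walk.cons h.symm (pth ht y a)).IsPath := by
    rw [← child_pth ht a h hu]; exact pth_isPath ht u a
  exact ((SimpleGraph.Walk.cons_isPath_iff _ _).mp hp).2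

include ht in
lemma not_mem_tail_child {y u : V} (h : T.Adj y u) (hu : u ∈ tail T a y) :
    y ∉ tail T a u := by
  rw [mem_tail_iff ht a]
  exact child_not_mem_pth ht a h hu

lemma tail_subset {y u : V} (hu : u ∈ tail T a y) : tail T a u ⊆ tail T a y := by
  classical
  intro v hv p
  have hup : u ∈ p.support := hv p
  have hyq : y ∈ (p.dropUntil u hup).support := hu _
  exact SimpleGraph.Walk.support_dropUntil_subset p hup hyq

include ht in
lemma child_mem_tail {x y u : V} (hadj : T.Adj x y) (hy : y ∈ tail T a x)
    (h : T.Adj y u) (hne : u ≠ x) : u ∈ tail T a y := by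
  rw [mem_tail_iff ht a]
  by_contra hc
  have hq : (SimpleGraph.Walk.cons h (pth ht u a)).IsPath := by
    rw [SimpleGraph.Walk.cons_isPath_iff]
    exact ⟨pth_isPath ht u a, hc⟩
  have hqe : SimpleGraph.Walk.cons h (pth ht u a) = pth ht y a := eq_pth ht hq
  have hx : x ∈ (pth ht y a).support := hy _
  have hdec := pth_decomp ht a hx
  have hs1 : (pth ht y a).support = y :: x :: (pth ht x a).support.tail := by
    rw [hdec, SimpleGraph.Walk.support_append, pth_adj ht hadj.symm]
    simp
  have hs2 : (pth ht y a).support = y :: u :: (pth ht u a).support.tail := by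
    rw [← hqe, SimpleGraph.Walk.support_cons]
    congr 1
    exact SimpleGraph.Walk.support_eq_cons (pth ht u a)
  rw [hs1] at hs2
  have : x = u := by
    have := congrArg (fun l => l.tail.head?) hs2
    simp at this
    rw [SimpleGraph.Walk.support_eq_cons (pth ht x a), SimpleGraph.Walk.support_eq_cons (pth ht u a),
      List.head?_cons, List.head?_cons] at this
    exact Option.some_injective _ this
  exact hne this.symm

include ht in
lemma tails_disjoint {y u₁ u₂ : V} (h1 : T.Adj y u₁) (hu1 : u₁ ∈ tail T a y)
    (h2 : T.Adj y u₂) (hu2 : u₂ ∈ tail T a y) (hne : u₁ ≠ u₂)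
    {v : V} (hv1 : v ∈ tail T a u₁) (hv2 : v ∈ tail T a u₂) : False := by
  classical
  -- u₂ is in the path from v to u₁, and symmetrically
  have key : ∀ (w₁ w₂ : V), T.Adj y w₁ → w₁ ∈ tail T a y → T.Adj y w₂ → w₂ ∈ tail T a y →
      w₁ ≠ w₂ → v ∈ tail T a w₁ → v ∈ tail T a w₂ → w₂ ∈ (pth ht v w₁).support := by
    intro w₁ w₂ a1 t1 a2 t2 hne12 m1 m2
    have hw1 : w₁ ∈ (pth ht v a).support := (mem_tail_iff ht a).mp m1
    have hw2 : w₂ ∈ (pth ht v a).support := (mem_tail_iff ht a).mp m2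
    have hdec := pth_decomp ht a hw1
    rw [hdec, SimpleGraph.Walk.support_append] at hw2
    rcases List.mem_append.mp hw2 with h | h
    · exact h
    · exfalso
      have : w₂ ∈ (pth ht w₁ a).support := List.mem_of_mem_tail h
      rw [child_pth ht a a1 t1, SimpleGraph.Walk.support_cons] at this
      rcases List.mem_cons.mp this with hmem | hmem
      · exact hne12 hmem.symm
      · exact child_not_mem_pth ht a a2 t2 hmem
  have k1 : u₂ ∈ (pth ht v u₁).support := key u₁ u₂ h1 hu1 h2 hu2 hne hv1 hv2
  have k2 : u₁ ∈ (pth ht v u₂).support := key u₂ u₁ h2 hu2 h1 hu1 hne.symm hv2 hv1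
  -- decompose pth v u₁ at u₂
  have htake : (pth ht v u₁).takeUntil u₂ k1 = pth ht v u₂ :=
    eq_pth ht ((pth_isPath ht v u₁).takeUntil k1)
  have hspec := SimpleGraph.Walk.take_spec (pth ht v u₁) k1
  have hnodup : (pth ht v u₁).support.Nodup := (pth_isPath ht v u₁).support_nodup
  rw [← hspec, SimpleGraph.Walk.support_append, htake] at hnodup
  have hdisj := List.disjoint_of_nodup_append hnodup
  apply hdisj k2
  have : u₁ ∈ ((pth ht v u₁).dropUntil u₂ k1).support := SimpleGraph.Walk.end_mem_support _
  rw [SimpleGraph.Walk.support_eq_cons] at this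
  rcases List.mem_cons.mp this with hm | hm
  · exact absurd hm hne
  · exact hm

include ht in
lemma tail_cover {x y v : V} (hadj : T.Adj x y) (hy : y ∈ tail T a x)
    (hv : v ∈ tail T a y) (hvy : v ≠ y) :
    ∃ u, T.Adj y u ∧ u ≠ x ∧ v ∈ tail T a u := by
  classical
  have hyv : y ∈ (pth ht v a).support := (mem_tail_iff ht a).mp hv
  have hdec := pth_decomp ht a hyv
  obtain ⟨u, h, r', hr⟩ := SimpleGraph.Walk.exists_eq_cons_of_ne (Ne.symm hvy) (pth ht v y).reverse
  have hus : u ∈ (pth ht v y).support := by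
    have : u ∈ (pth ht v y).reverse.support := by
      rw [hr, SimpleGraph.Walk.support_cons]
      exact List.mem_cons_of_mem _ r'.start_mem_support
    rwa [SimpleGraph.Walk.support_reverse, List.mem_reverse] at this
  refine ⟨u, h, ?_, ?_⟩
  · intro hux
    have hx2 : x ∈ (pth ht y a).support := hy _
    have hx2' : x ∈ (pth ht y a).support.tail := by
      rw [SimpleGraph.Walk.support_eq_cons] at hx2
      rcases List.mem_cons.mp hx2 with h' | h'
      · exact absurd h' hadj.ne
      · exact h'
    have hnodup : (pth ht v a).support.Nodup := (pth_isPath ht v a).support_nodup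
    rw [hdec, SimpleGraph.Walk.support_append] at hnodup
    exact List.disjoint_of_nodup_append hnodup (hux ▸ hus) hx2'
  · rw [mem_tail_iff ht a, hdec, SimpleGraph.Walk.support_append]
    exact List.mem_append.mpr (Or.inl hus)

end paths

section card
variable {V : Type*} [Fintype V] {T : SimpleGraph V}

lemma tail_card (ht : T.IsTree) (a x y : V) (hadj : T.Adj x y) (hy : y ∈ tail T a x) :
    ∃ C : Finset V, (∀ u, u ∈ C ↔ T.Adj y u ∧ u ≠ x) ∧
      (tail T a y).ncard = 1 + ∑ u ∈ C, (tail T a u).ncard := by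
  classical
  refine ⟨Finset.univ.filter (fun u => T.Adj y u ∧ u ≠ x), fun u => by simp, ?_⟩
  set C : Finset V := Finset.univ.filter (fun u => T.Adj y u ∧ u ≠ x) with hC
  have hmemC : ∀ u, u ∈ C ↔ T.Adj y u ∧ u ≠ x := fun u => by simp [hC]
  have hncard : ∀ u : V, (tail T a u).ncard
      = (Finset.univ.filter (· ∈ tail T a u)).card := by
    intro u
    rw [Set.ncard_eq_toFinset_card', Set.filter_mem_univ_eq_toFinset]
  set Ft : V → Finset V := fun u => Finset.univ.filter (· ∈ tail T a u) with hFt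
  have hmemFt : ∀ u v : V, v ∈ Ft u ↔ v ∈ tail T a u := by
    intro u v
    rw [hFt]
    simp
  -- the partition
  have hpart : Ft y = insert y (C.biUnion Ft) := by
    ext v
    rw [hmemFt, Finset.mem_insert, Finset.mem_biUnion]
    constructor
    · intro hv
      by_cases hvy : v = y
      · exact Or.inl hvy
      · obtain ⟨u, h1, h2, h3⟩ := tail_cover ht a hadj hy hv hvy
        exact Or.inr ⟨u, (hmemC u).mpr ⟨h1, h2⟩, (hmemFt u v).mpr h3⟩
    · rintro (rfl | ⟨u, huC, hvu⟩)
      · exact mem_tail_self a v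
      · obtain ⟨h1, h2⟩ := (hmemC u).mp huC
        exact tail_subset a (child_mem_tail ht a hadj hy h1 h2) ((hmemFt u v).mp hvu)
  have hynotin : y ∉ C.biUnion Ft := by
    rw [Finset.mem_biUnion]
    rintro ⟨u, huC, hyu⟩
    obtain ⟨h1, h2⟩ := (hmemC u).mp huC
    exact not_mem_tail_child ht a h1 (child_mem_tail ht a hadj hy h1 h2) ((hmemFt u y).mp hyu)
  have hdisj : ∀ u₁ ∈ C, ∀ u₂ ∈ C, u₁ ≠ u₂ → Disjoint (Ft u₁) (Ft u₂) := by
    intro u₁ h1 u₂ h2 hne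
    obtain ⟨a1, b1⟩ := (hmemC u₁).mp h1
    obtain ⟨a2, b2⟩ := (hmemC u₂).mp h2
    rw [Finset.disjoint_left]
    intro v hv1 hv2
    exact tails_disjoint ht a a1 (child_mem_tail ht a hadj hy a1 b1)
      a2 (child_mem_tail ht a hadj hy a2 b2) hne
      ((hmemFt u₁ v).mp hv1) ((hmemFt u₂ v).mp hv2)
  have hgoal : (Ft y).card = 1 + ∑ u ∈ C, (Ft u).card := by
    rw [hpart, Finset.card_insert_of_notMem hynotin, Finset.card_biUnion hdisj]
    omega
  calc (tail T a y).ncard = (Ft y).card := by rw [hncard y]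
    _ = 1 + ∑ u ∈ C, (Ft u).card := hgoal
    _ = 1 + ∑ u ∈ C, (tail T a u).ncard := by
        congr 1
        apply Finset.sum_congr rfl
        intro u _
        rw [hncard u]

end card

section superadd

lemma Ico_eq_range (τ : ℝ) (m : ℕ) :
    ∑ k ∈ Finset.Ico 1 (m+1), τ ^ k = ∑ i ∈ Finset.range m, τ ^ (i+1) := by
  rw [Finset.sum_Ico_eq_sum_range]
  simp only [Nat.add_sub_cancel]
  exact Finset.sum_congr rfl fun i _ => by rw [add_comm]

lemma S_succ (τ : ℝ) (m : ℕ) :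
    ∑ i ∈ Finset.range (m+1), τ ^ (i+1)
      = τ * (1 + ∑ i ∈ Finset.range m, τ ^ (i+1)) := by
  rw [Finset.sum_range_succ',
    Finset.sum_congr rfl (fun i (_ : i ∈ Finset.range m) => by ring :
      ∀ i ∈ Finset.range m, τ ^ (i+1+1) = τ * τ ^ (i+1)), ← Finset.mul_sum]
  ring

lemma S_superadd {τ : ℝ} (hτ : 1 ≤ τ) (m n : ℕ) :
    (∑ i ∈ Finset.range m, τ ^ (i+1)) + (∑ i ∈ Finset.range n, τ ^ (i+1))
      ≤ ∑ i ∈ Finset.range (m+n), τ ^ (i+1) := by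
  induction n with
  | zero => simp
  | succ n ih =>
      have e : m + (n+1) = (m+n) + 1 := by omega
      rw [Finset.sum_range_succ, e, Finset.sum_range_succ]
      have hpow : τ ^ (n+1) ≤ τ ^ (m+n+1) := pow_le_pow_right₀ hτ (by omega)
      linarith

lemma S_superadd_sum {τ : ℝ} (hτ : 1 ≤ τ) {ι : Type*} (s : Finset ι) (f : ι → ℕ) :
    (∑ i ∈ s, ∑ k ∈ Finset.range (f i), τ ^ (k+1))
      ≤ ∑ k ∈ Finset.range (∑ i ∈ s, f i), τ ^ (k+1) := by
  classical
  induction s using Finset.induction with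
  | empty => simp
  | insert j s' hnotin ih =>
      rw [Finset.sum_insert hnotin, Finset.sum_insert hnotin]
      calc _ ≤ (∑ k ∈ Finset.range (f j), τ ^ (k+1))
              + ∑ k ∈ Finset.range (∑ i ∈ s', f i), τ ^ (k+1) := by linarith
        _ ≤ _ := S_superadd hτ _ _

end superadd

lemma P_eq_range (τ : ℝ) (m : ℕ) :
    P τ (m + 1) = 2 * (∑ i ∈ Finset.range m, τ ^ (i+1)) + 1 := by
  rw [P, Ico_eq_range]

lemma main_aux {V : Type*} [Fintype V] (T : SimpleGraph V) (ht : T.IsTree)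
    (w : V → V → ℝ)
    (hw_pos : ∀ x y, T.Adj x y → 0 < w x y)
    (hw_zero : ∀ x y, ¬ T.Adj x y → w x y = 0)
    (τ : ℝ) (hτ : ∀ x y z, T.Adj x y → T.Adj x z → w x y ≤ τ * w x z)
    (a : V) (H : V → ℝ) (hH : IsWeightedHittingTime T w a H) :
    ∀ n : ℕ, ∀ x y : V, T.Adj x y → y ∈ tail T a x → (tail T a y).ncard ≤ n →
      H y - H x ≤ P τ (tailEdges T a y + 1) := by
  intro n
  induction n with
  | zero =>
      intro x y hadj hy hle
      exfalso
      have : 0 < (tail T a y).ncard :=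
        (Set.ncard_pos (Set.toFinite _)).mpr ⟨y, mem_tail_self a y⟩
      omega
  | succ n ih =>
      intro x y hadj hy hle
      classical
      have hτ1 : 1 ≤ τ := by
        have h1 := hτ x y y hadj hadj
        nlinarith [hw_pos x y hadj]
      have hya : y ≠ a := by
        rintro rfl
        have := hy SimpleGraph.Walk.nil
        simp only [SimpleGraph.Walk.support_nil, List.mem_singleton] at this
        subst this
        exact T.irrefl hadj
      obtain ⟨C, hmemC, hcard⟩ := tail_card ht a x y hadj hy
      have hxC : x ∉ C := fun h => ((hmemC x).mp h).2 rfl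
      -- facts about children
      have hchild : ∀ u ∈ C, T.Adj y u ∧ u ∈ tail T a y := by
        intro u hu
        obtain ⟨h1, h2⟩ := (hmemC u).mp hu
        exact ⟨h1, child_mem_tail ht a hadj hy h1 h2⟩
      have hIH : ∀ u ∈ C, H u - H y ≤ P τ (tailEdges T a u + 1) := by
        intro u hu
        obtain ⟨h1, h2⟩ := hchild u hu
        have hss : tail T a u ⊂ tail T a y := by
          refine ssubset_of_subset_of_ne (tail_subset a h2) (fun he => ?_)
          exact not_mem_tail_child ht a h1 h2 (he ▸ mem_tail_self a y)
        have hlt : (tail T a u).ncard < (tail T a y).ncard :=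
          Set.ncard_lt_ncard hss (Set.toFinite _)
        exact ih y u h1 h2 (by omega)
      -- the linear system at y
      set D : Finset V := insert x C with hD
      have hvanish : ∀ u ∈ Finset.univ, u ∉ D → w y u = 0 := by
        intro u _ hu
        apply hw_zero
        intro hadj'
        apply hu
        rw [hD, Finset.mem_insert]
        by_cases hux : u = x
        · exact Or.inl hux
        · exact Or.inr ((hmemC u).mpr ⟨hadj', hux⟩)
      have h_univ1 : ∑ u, w y u * (H y - H u) = ∑ u ∈ D, w y u * (H y - H u) :=
        (Finset.sum_subset (Finset.subset_univ D)
          (fun u h1 h2 => by rw [hvanish u h1 h2, zero_mul])).symm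
      have h_univ2 : (∑ u, w y u) = ∑ u ∈ D, w y u :=
        (Finset.sum_subset (Finset.subset_univ D)
          (fun u h1 h2 => hvanish u h1 h2)).symm
      have hsys := hH.2 y hya
      have hsum0 : ∑ u, w y u * (H y - H u) = ∑ u, w y u := by
        have e1 : ∑ u, w y u * (H y - H u)
            = (∑ u, w y u) * H y - ∑ u, w y u * H u := by
          rw [Finset.sum_mul]
          rw [← Finset.sum_sub_distrib]
          exact Finset.sum_congr rfl fun u _ => by ring
        rw [e1]
        linarith [hsys]
      have heq : w y x * (H y - H x) + ∑ u ∈ C, w y u * (H y - H u)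
          = w y x + ∑ u ∈ C, w y u := by
        have := hsum0
        rw [h_univ1, h_univ2, hD, Finset.sum_insert hxC, Finset.sum_insert hxC] at this
        exact this
      have heq2 : w y x * (H y - H x)
          = w y x + ∑ u ∈ C, w y u * (1 + (H u - H y)) := by
        have e : ∀ u ∈ C, w y u * (1 + (H u - H y))
            = w y u - w y u * (H y - H u) := fun u _ => by ring
        rw [Finset.sum_congr rfl e, Finset.sum_sub_distrib]
        linarith [heq]
      -- termwise bound
      have hPnn : ∀ m : ℕ, 0 ≤ P τ m := by
        intro m
        have : 0 ≤ ∑ k ∈ Finset.Ico 1 m, τ ^ k :=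
          Finset.sum_nonneg fun k _ => pow_nonneg (by linarith) k
        rw [P]
        linarith
      have hterm : ∀ u ∈ C, w y u * (1 + (H u - H y))
          ≤ w y x * (τ * (1 + P τ (tailEdges T a u + 1))) := by
        intro u hu
        obtain ⟨h1, _⟩ := hchild u hu
        have hw1 : 0 < w y u := hw_pos y u h1
        have hw2 : w y u ≤ τ * w y x := hτ y u x h1 hadj.symm
        have hp1 : H u - H y ≤ P τ (tailEdges T a u + 1) := hIH u hu
        have hp0 : 0 ≤ 1 + P τ (tailEdges T a u + 1) := by linarith [hPnn (tailEdges T a u + 1)]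
        calc w y u * (1 + (H u - H y))
            ≤ w y u * (1 + P τ (tailEdges T a u + 1)) := by
              apply mul_le_mul_of_nonneg_left (by linarith) (le_of_lt hw1)
          _ ≤ (τ * w y x) * (1 + P τ (tailEdges T a u + 1)) :=
              mul_le_mul_of_nonneg_right hw2 hp0
          _ = w y x * (τ * (1 + P τ (tailEdges T a u + 1))) := by ring
      have hwyx : 0 < w y x := hw_pos y x hadj.symm
      have hmain : H y - H x ≤ 1 + ∑ u ∈ C, τ * (1 + P τ (tailEdges T a u + 1)) := by
        have hb : w y x * (H y - H x)
            ≤ w y x * (1 + ∑ u ∈ C, τ * (1 + P τ (tailEdges T a u + 1))) := by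
          rw [heq2, mul_add, mul_one, Finset.mul_sum]
          have := Finset.sum_le_sum hterm
          linarith
        exact le_of_mul_le_mul_left hb hwyx
      -- arithmetic bound
      have hτsucc : ∀ m : ℕ, τ * (1 + P τ (m + 1))
          = 2 * ∑ i ∈ Finset.range (m+1), τ ^ (i+1) := by
        intro m
        rw [P_eq_range, S_succ]
        ring
      have hcard1 : ∀ u ∈ C, 1 ≤ (tail T a u).ncard := by
        intro u hu
        exact (Set.ncard_pos (Set.toFinite _)).mpr ⟨u, mem_tail_self a u⟩
      have hsum_l : ∑ u ∈ C, (tailEdges T a u + 1) = tailEdges T a y := by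
        have e1 : ∀ u ∈ C, tailEdges T a u + 1 = (tail T a u).ncard := by
          intro u hu
          have := hcard1 u hu
          rw [tailEdges]
          omega
        rw [Finset.sum_congr rfl e1, tailEdges, hcard]
        omega
      have hfinal : ∑ u ∈ C, τ * (1 + P τ (tailEdges T a u + 1))
          ≤ 2 * ∑ i ∈ Finset.range (tailEdges T a y), τ ^ (i+1) := by
        rw [Finset.sum_congr rfl (fun u _ => hτsucc (tailEdges T a u)), ← Finset.mul_sum]
        have h1 := S_superadd_sum hτ1 C (fun u => tailEdges T a u + 1)
        rw [hsum_l] at h1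
        linarith
      rw [P_eq_range]
      linarith


/-- For a random walk on a finite tree `T` generated by an edge-weight function with
asymmetry at most `τ`, with absorbing vertex `a`: for any vertex `x` and any neighbor
`y` of `x` in the tail of `x`, `H(y,a) − H(x,a) ≤ P(τ, ℓ(y)+1)`. -/
theorem tree_weighted_tail_hitting_le {V : Type*} [Fintype V]
    (T : SimpleGraph V) (htree : T.IsTree)
    (w : V → V → ℝ)
    (hw_symm : ∀ x y, w x y = w y x)
    (hw_pos : ∀ x y, T.Adj x y → 0 < w x y)
    (hw_zero : ∀ x y, ¬ T.Adj x y → w x y = 0)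
    (τ : ℝ) (hτ : ∀ x y z, T.Adj x y → T.Adj x z → w x y ≤ τ * w x z)
    (a x y : V) (hadj : T.Adj x y) (hy : y ∈ tail T a x)
    (H : V → ℝ) (hH : IsWeightedHittingTime T w a H) :
    H y - H x ≤ P τ (tailEdges T a y + 1) := by
  exact main_aux T htree w hw_pos hw_zero τ hτ a H hH (tail T a y).ncard x y hadj hy le_rfl
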